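/- Let v_1, …, v_{n+1} be affinely independent points in Euclidean space ℝ^n (n ≥ 2). Let Q_τ be the n×n Gram matrix with entries (Q_τ)_{ij} = ⟨v_i − v_{n+1}, v_j − v_{n+1}⟩ for 1 ≤ i, j ≤ n, and let Q_{τ_{n+1}} be the (n−1)×(n−1) Gram matrix of the face with vertices v_1, …, v_n, namely (Q_{τ_{n+1}})_{ij} = ⟨v_i − v_n, v_j − v_n⟩ for 1 ≤ i, j ≤ n−1. Let p be the orthogonal projection of v_{n+1} onto the affine span of {v_1, …, v_n}. Then det(Q_τ) = ‖v_{n+1} − p‖² · det(Q_{τ_{n+1}}). -/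

import Mathlib

open Finset Matrix
open scoped RealInnerProductSpace

lemma aux_orth {F : Type*} [NormedAddCommGroup F] [InnerProductSpace ℝ F]
    (s : AffineSubspace ℝ F) {p q : F} (hp : p ∈ s)
    (hmin : ∀ r ∈ s, dist q p ≤ dist q r) :
    ∀ x ∈ s.direction, ⟪q - p, x⟫ = 0 := by
  have h0 : (0 : F) ∈ s.direction := zero_mem _
  have hbdd : BddBelow (Set.range fun w : s.direction => ‖(q - p) - w‖) := by
    refine ⟨0, ?_⟩
    rintro x ⟨w, rfl⟩
    exact norm_nonneg _
  have key : ‖(q - p) - 0‖ = ⨅ w : s.direction, ‖(q - p) - w‖ := by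
    apply le_antisymm
    · apply le_ciInf
      intro w
      have hw : (w : F) +ᵥ p ∈ s :=
        AffineSubspace.vadd_mem_of_mem_direction w.2 hp
      have h1 := hmin _ hw
      rw [dist_eq_norm, dist_eq_norm] at h1
      rw [sub_zero]
      have h2 : q - ((w : F) +ᵥ p) = q - p - w := by
        rw [vadd_eq_add, sub_add_eq_sub_sub, sub_right_comm]
      rw [h2] at h1
      exact h1
    · exact ciInf_le hbdd ⟨0, h0⟩
  have := (Submodule.norm_eq_iInf_iff_real_inner_eq_zero s.direction h0).mp key
  simpa using this

lemma detC (n : ℕ) :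
    (Matrix.of fun i j : Fin (n+1) =>
      if i = j then (1:ℝ) else if i = Fin.last n then -1 else 0).det = 1 := by
  rw [Matrix.det_of_lowerTriangular]
  · simp
  · intro i j hij
    simp only [OrderDual.toDual_lt_toDual] at hij
    have h1 : i ≠ j := ne_of_lt hij
    have h2 : i ≠ Fin.last n := by
      intro h; subst h; exact absurd hij (not_lt.2 (Fin.le_last j))
    simp [h1, h2]

lemma NC (n : ℕ) (M : Matrix (Fin (n+1)) (Fin (n+1)) ℝ) (k j : Fin (n+1)) :
    (M * Matrix.of fun i j : Fin (n+1) =>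
      if i = j then (1:ℝ) else if i = Fin.last n then -1 else 0) k j =
      if j = Fin.last n then M k (Fin.last n) else M k j - M k (Fin.last n) := by
  rw [Matrix.mul_apply]
  rcases eq_or_ne j (Fin.last n) with rfl | hj
  · simp only [Matrix.of_apply, if_pos rfl]
    have : ∀ i : Fin (n+1), M k i * (if i = Fin.last n then (1:ℝ)
        else if i = Fin.last n then -1 else 0) = if i = Fin.last n then M k (Fin.last n) else 0 := by
      intro i; split_ifs with h <;> simp [h]
    rw [Finset.sum_congr rfl fun i _ => this i, Finset.sum_ite_eq' univ]
    simp
  · simp only [Matrix.of_apply, if_neg hj]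
    have : ∀ i : Fin (n+1), M k i * (if i = j then (1:ℝ)
        else if i = Fin.last n then -1 else 0) =
        (if i = j then M k j else 0) + (if i = Fin.last n then -(M k (Fin.last n)) else 0) := by
      intro i
      split_ifs with h1 h2 h2 <;> simp_all
    rw [Finset.sum_congr rfl fun i _ => this i, Finset.sum_add_distrib,
      Finset.sum_ite_eq' univ, Finset.sum_ite_eq' univ]
    simp [sub_eq_add_neg]

theorem det_eq_height_mul_det_face (m : ℕ)
    (v : Fin (m + 3) → EuclideanSpace ℝ (Fin (m + 2)))
    (hv : AffineIndependent ℝ v)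
    (Qτ : Matrix (Fin (m + 2)) (Fin (m + 2)) ℝ)
    (hQτ : ∀ i j, Qτ i j =
      ⟪v i.castSucc - v (Fin.last (m + 2)), v j.castSucc - v (Fin.last (m + 2))⟫)
    (Qface : Matrix (Fin (m + 1)) (Fin (m + 1)) ℝ)
    (hQface : ∀ i j, Qface i j =
      ⟪v i.castSucc.castSucc - v (Fin.last (m + 1)).castSucc,
       v j.castSucc.castSucc - v (Fin.last (m + 1)).castSucc⟫)
    (p : EuclideanSpace ℝ (Fin (m + 2)))
    (hp : p ∈ affineSpan ℝ (Set.range fun i : Fin (m + 2) => v i.castSucc))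
    (hmin : ∀ q ∈ affineSpan ℝ (Set.range fun i : Fin (m + 2) => v i.castSucc),
      dist (v (Fin.last (m + 2))) p ≤ dist (v (Fin.last (m + 2))) q) :
    Qτ.det = ‖v (Fin.last (m + 2)) - p‖ ^ 2 * Qface.det := by
  classical
  have inner_coord : ∀ x y : EuclideanSpace ℝ (Fin (m+2)), ⟪x, y⟫ = ∑ k, x k * y k := by
    intro x y; simp [PiLp.inner_apply, RCLike.inner_apply, starRingEnd_apply]
    exact Finset.sum_congr rfl fun _ _ => mul_comm _ _
  set vl := v (Fin.last (m+2)) with hvl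
  set vn := v (Fin.last (m+1)).castSucc with hvn
  set w := vl - p with hw
  set u := vn - p with hu
  set e : Fin (m+2) → EuclideanSpace ℝ (Fin (m+2)) := fun i => v i.castSucc - vl with he
  set f : Fin (m+1) → EuclideanSpace ℝ (Fin (m+2)) := fun i => v i.castSucc.castSucc - vn with hf
  set g : Fin (m+2) → EuclideanSpace ℝ (Fin (m+2)) := Fin.snoc f (vn - vl) with hg
  have hel : e (Fin.last (m+1)) = vn - vl := by rw [he]
  have hef : ∀ i : Fin (m+1), f i = e i.castSucc - e (Fin.last (m+1)) := by
    intro i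
    simp only [hf, he]
    abel
  set M : Matrix (Fin (m+2)) (Fin (m+2)) ℝ := Matrix.of (fun k i => e i k) with hM
  set N : Matrix (Fin (m+2)) (Fin (m+2)) ℝ := Matrix.of (fun k i => g i k) with hN
  set C : Matrix (Fin (m+2)) (Fin (m+2)) ℝ :=
    Matrix.of (fun i j : Fin (m+2) =>
      if i = j then (1:ℝ) else if i = Fin.last (m+1) then -1 else 0) with hC
  -- Qτ = Mᵀ * M
  have hQτM : Qτ = Mᵀ * M := by
    ext i j
    rw [hQτ i j, Matrix.mul_apply, inner_coord]
    simp [hM, he]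
  -- N = M * C
  have hNMC : N = M * C := by
    ext k j
    rw [hC, NC (m+1) M k j]
    induction j using Fin.lastCases with
    | last =>
      simp only [hN, Matrix.of_apply, hg, Fin.snoc_last, hM, hel]
      simp
    | cast j' =>
      rw [if_neg (Fin.castSucc_lt_last j').ne]
      simp only [hN, Matrix.of_apply, hg, Fin.snoc_castSucc, hM]
      rw [hef j']
      simp
  set G : Matrix (Fin (m+2)) (Fin (m+2)) ℝ := Nᵀ * N with hG
  have hQG : Qτ.det = G.det := by
    rw [hQτM, hG, Matrix.det_mul, Matrix.det_mul, Matrix.det_transpose, Matrix.det_transpose,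
      hNMC, Matrix.det_mul, hC, detC (m+1), mul_one]
  have hGij : ∀ i j, G i j = ⟪g i, g j⟫ := by
    intro i j
    rw [hG, Matrix.mul_apply, inner_coord]
    simp [hN]
  -- orthogonality
  have horth : ∀ x ∈ (affineSpan ℝ (Set.range fun i : Fin (m + 2) => v i.castSucc)).direction,
      ⟪w, x⟫ = 0 := by
    rw [hw, hvl]
    exact aux_orth _ hp hmin
  have hmem : ∀ i : Fin (m+2), v i.castSucc ∈
      affineSpan ℝ (Set.range fun i : Fin (m + 2) => v i.castSucc) :=
    fun i => mem_affineSpan ℝ (Set.mem_range_self i)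
  have hfd : ∀ i : Fin (m+1), f i ∈
      (affineSpan ℝ (Set.range fun i : Fin (m + 2) => v i.castSucc)).direction := by
    intro i
    have := AffineSubspace.vsub_mem_direction (hmem i.castSucc) (hmem (Fin.last (m+1)))
    simpa [hf, vsub_eq_sub, hvn] using this
  have hud : u ∈ (affineSpan ℝ (Set.range fun i : Fin (m + 2) => v i.castSucc)).direction := by
    have := AffineSubspace.vsub_mem_direction (hmem (Fin.last (m+1))) hp
    simpa [hu, vsub_eq_sub, hvn] using this
  -- u is a combination of the f i
  have hcu : ∃ c : Fin (m+1) → ℝ, ∑ i, c i • f i = u := by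
    have h1 := hud
    rw [direction_affineSpan,
      vectorSpan_range_eq_span_range_vsub_right ℝ (fun i : Fin (m+2) => v i.castSucc)
        (Fin.last (m+1)), Submodule.mem_span_range_iff_exists_fun] at h1
    obtain ⟨c, hc⟩ := h1
    refine ⟨fun i => c i.castSucc, ?_⟩
    rw [Fin.sum_univ_castSucc] at hc
    simp only [vsub_eq_sub, ← hvn, sub_self, smul_zero, add_zero] at hc
    rw [← hc]
  -- split the last row
  set r₁ : Fin (m+2) → ℝ := fun j => ⟪u, g j⟫ with hr₁
  set r₂ : Fin (m+2) → ℝ := fun j => if j = Fin.last (m+1) then ‖w‖^2 else 0 with hr₂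
  have hgl : g (Fin.last (m+1)) = u - w := by
    rw [hg, Fin.snoc_last, hu, hw, sub_sub_sub_cancel_right]
  have hrow : ∀ j, G (Fin.last (m+1)) j = r₁ j + r₂ j := by
    intro j
    rw [hGij, hgl, inner_sub_left]
    induction j using Fin.lastCases with
    | last =>
      have h1 : ⟪w, g (Fin.last (m+1))⟫ = -‖w‖^2 := by
        rw [hgl, inner_sub_right, horth u hud, real_inner_self_eq_norm_sq, zero_sub]
      rw [h1]
      simp only [hr₁, hr₂, eq_self_iff_true, if_true]
      ring
    | cast j' =>
      have h1 : ⟪w, g j'.castSucc⟫ = 0 := by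
        rw [hg]
        rw [show (Fin.snoc f (vn - vl) : Fin (m+2) → EuclideanSpace ℝ (Fin (m+2)))
          j'.castSucc = f j' from Fin.snoc_castSucc _ _ _]
        exact horth _ (hfd j')
      rw [h1]
      simp only [hr₁, hr₂, if_neg (Fin.castSucc_lt_last j').ne]
      ring
  have hsplit : G.det = (G.updateRow (Fin.last (m+1)) r₁).det
      + (G.updateRow (Fin.last (m+1)) r₂).det := by
    have h1 : G = G.updateRow (Fin.last (m+1)) (r₁ + r₂) := by
      have h2 : r₁ + r₂ = G (Fin.last (m+1)) := funext fun j => (hrow j).symm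
      rw [h2, Matrix.updateRow_eq_self]
    conv_lhs => rw [h1]
    exact Matrix.det_updateRow_add G (Fin.last (m+1)) r₁ r₂
  -- first determinant vanishes
  have hdet1 : (G.updateRow (Fin.last (m+1)) r₁).det = 0 := by
    obtain ⟨c, hc⟩ := hcu
    apply Matrix.exists_vecMul_eq_zero_iff.mp
    refine ⟨Fin.snoc c (-1), ?_, ?_⟩
    · intro hcon
      have := congrFun hcon (Fin.last (m+1))
      simp [Fin.snoc_last] at this
    · funext j
      have hrowval : ∀ i : Fin (m+2), (G.updateRow (Fin.last (m+1)) r₁) i j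
          = ⟪(Fin.snoc f u : Fin (m+2) → EuclideanSpace ℝ (Fin (m+2))) i, g j⟫ := by
        intro i
        induction i using Fin.lastCases with
        | last => rw [Matrix.updateRow_self, Fin.snoc_last, hr₁]
        | cast i' =>
          rw [Matrix.updateRow_ne (Fin.castSucc_lt_last i').ne, hGij, Fin.snoc_castSucc, hg,
            Fin.snoc_castSucc]
      have : (Fin.snoc c (-1) ᵥ* G.updateRow (Fin.last (m+1)) r₁) j
          = ∑ i, (Fin.snoc c (-1) : Fin (m+2) → ℝ) i
              * ⟪(Fin.snoc f u : Fin (m+2) → EuclideanSpace ℝ (Fin (m+2))) i, g j⟫ := by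
        rw [Matrix.vecMul, dotProduct]
        exact Finset.sum_congr rfl fun i _ => by rw [hrowval i]
      rw [this]
      have h3 : ∀ i : Fin (m+2), (Fin.snoc c (-1) : Fin (m+2) → ℝ) i
          * ⟪(Fin.snoc f u : Fin (m+2) → EuclideanSpace ℝ (Fin (m+2))) i, g j⟫
          = ⟪(Fin.snoc c (-1) : Fin (m+2) → ℝ) i
              • (Fin.snoc f u : Fin (m+2) → EuclideanSpace ℝ (Fin (m+2))) i, g j⟫ := by
        intro i; rw [real_inner_smul_left]
      rw [Finset.sum_congr rfl fun i _ => h3 i, ← sum_inner]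
      have h4 : ∑ i : Fin (m+2), (Fin.snoc c (-1) : Fin (m+2) → ℝ) i
          • (Fin.snoc f u : Fin (m+2) → EuclideanSpace ℝ (Fin (m+2))) i = 0 := by
        rw [Fin.sum_univ_castSucc]
        simp only [Fin.snoc_castSucc, Fin.snoc_last, neg_one_smul]
        rw [hc]
        simp
      rw [h4, inner_zero_left]
      rfl
  -- second determinant
  have hdet2 : (G.updateRow (Fin.last (m+1)) r₂).det = ‖w‖^2 * Qface.det := by
    rw [Matrix.det_succ_row (G.updateRow (Fin.last (m+1)) r₂) (Fin.last (m+1))]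
    rw [Finset.sum_eq_single (Fin.last (m+1))]
    · have hsub : (G.updateRow (Fin.last (m+1)) r₂).submatrix
          (Fin.last (m+1)).succAbove (Fin.last (m+1)).succAbove = Qface := by
        ext i j
        rw [Matrix.submatrix_apply]
        simp only [Fin.succAbove_last]
        rw [show G.updateRow (Fin.last (m+1)) r₂ i.castSucc = G i.castSucc from
          Matrix.updateRow_ne (Fin.castSucc_lt_last i).ne]
        rw [hGij, hQface i j]
        simp [hg, Fin.snoc_castSucc, hf, hvn]
      rw [hsub, Matrix.updateRow_self]
      have heven : Even ((Fin.last (m+1) : Fin (m+2)).val + (Fin.last (m+1) : Fin (m+2)).val) :=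
        ⟨m+1, by simp [Fin.val_last, two_mul]⟩
      rw [Even.neg_one_pow heven, one_mul]
      have : r₂ (Fin.last (m+1)) = ‖w‖^2 := by rw [hr₂]; simp
      rw [this]
    · intro b _ hb
      rw [Matrix.updateRow_self]
      have : r₂ b = 0 := by rw [hr₂]; simp [hb]
      rw [this, mul_zero, zero_mul]
    · intro hcon
      exact absurd (Finset.mem_univ _) hcon
  rw [hQG, hsplit, hdet1, hdet2, zero_add]
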